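/- Let α > 0 and let θ_α > 0 be the unique nonzero root of cosh(θ) − 1 − αθ = 0. If W is a rate-1 continuous-time simple random walk on ℤ started at an integer x ≤ 0, then P[ ∃ t ≥ 0 : W_t − αt > 0 ] ≤ e^{θ_α x}; moreover θ_α = 2α + O(α²) as α → 0. -/

import Mathlib

open MeasureTheory ProbabilityTheory Filter Set

noncomputable section

lemma tsum_ofReal_exp (x : ℝ) (hx : 0 ≤ x) :
    ∑' n : ℕ, ENNReal.ofReal (x ^ n / n.factorial) = ENNReal.ofReal (Real.exp x) := by
  rw [← ENNReal.ofReal_tsum_of_nonneg]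
  · rw [Real.exp_eq_exp_ℝ, NormedSpace.exp_eq_tsum_div]
  · intro n
    positivity
  · exact Real.summable_pow_div_factorial x

lemma summable_inner (c : ℝ) (hc : 0 ≤ c) (m : ℕ) :
    Summable (fun n : ℕ => c ^ (2 * n + m) / (n.factorial * (n + m).factorial)) := by
  have hg : Summable (fun n : ℕ => c ^ m * ((c ^ 2) ^ n / n.factorial)) :=
    (Real.summable_pow_div_factorial (c ^ 2)).mul_left _
  refine hg.of_nonneg_of_le (fun n => by positivity) (fun n => ?_)
  rw [pow_add, pow_mul, mul_comm ((c^2)^n), mul_div_assoc]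
  gcongr
  nth_rewrite 1 [← mul_one ((n.factorial : ℝ))]
  gcongr
  exact_mod_cast Nat.one_le_iff_ne_zero.2 (Nat.factorial_ne_zero _)

def skellamEquiv : ℤ × ℕ ≃ ℕ × ℕ where
  toFun p := (p.2 + p.1.toNat, p.2 + (-p.1).toNat)
  invFun q := ((q.1 : ℤ) - q.2, min q.1 q.2)
  left_inv := by rintro ⟨k, n⟩; simp only [Prod.mk.injEq]; omega
  right_inv := by rintro ⟨a, b⟩; simp only [Prod.mk.injEq]; omega

lemma mgf_sum (θ t : ℝ) (ht : 0 ≤ t) :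
    ∑' k : ℤ, ENNReal.ofReal (Real.exp (θ * k)) * ENNReal.ofReal
      (Real.exp (-t) * ∑' n : ℕ, (t / 2) ^ (2 * n + k.natAbs) /
        (n.factorial * (n + k.natAbs).factorial))
    = ENNReal.ofReal (Real.exp (t * (Real.cosh θ - 1))) := by
  have ht2 : (0:ℝ) ≤ t / 2 := by linarith
  have key : ∀ k : ℤ,
      ENNReal.ofReal (Real.exp (θ * k)) * ENNReal.ofReal
        (Real.exp (-t) * ∑' n : ℕ, (t / 2) ^ (2 * n + k.natAbs) /
          (n.factorial * (n + k.natAbs).factorial))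
      = ENNReal.ofReal (Real.exp (-t)) * ∑' n : ℕ,
          ENNReal.ofReal (Real.exp (θ * k) * ((t / 2) ^ (2 * n + k.natAbs) /
            (n.factorial * (n + k.natAbs).factorial))) := by
    intro k
    rw [ENNReal.ofReal_mul (by positivity), ENNReal.ofReal_tsum_of_nonneg
      (fun n => by positivity) (summable_inner _ ht2 _), ← mul_assoc,
      mul_comm (ENNReal.ofReal (Real.exp (θ * k))), mul_assoc, ← ENNReal.tsum_mul_left]
    congr 1
    refine tsum_congr fun n => ?_
    rw [← ENNReal.ofReal_mul (by positivity)]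
  simp_rw [key]
  rw [ENNReal.tsum_mul_left]
  -- now reindex
  have hre : ∑' (k : ℤ) (n : ℕ),
      ENNReal.ofReal (Real.exp (θ * k) * ((t / 2) ^ (2 * n + k.natAbs) /
        (n.factorial * (n + k.natAbs).factorial)))
      = ∑' q : ℕ × ℕ, ENNReal.ofReal ((Real.exp θ * (t/2)) ^ q.1 / q.1.factorial) *
          ENNReal.ofReal ((Real.exp (-θ) * (t/2)) ^ q.2 / q.2.factorial) := by
    rw [← ENNReal.tsum_prod, ← skellamEquiv.tsum_eq
      (f := fun q : ℕ × ℕ => ENNReal.ofReal ((Real.exp θ * (t/2)) ^ q.1 / q.1.factorial) *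
        ENNReal.ofReal ((Real.exp (-θ) * (t/2)) ^ q.2 / q.2.factorial))]
    refine tsum_congr fun p => ?_
    obtain ⟨k, n⟩ := p
    simp only [skellamEquiv, Equiv.coe_fn_mk]
    rw [← ENNReal.ofReal_mul (by positivity)]
    congr 1
    have h1 : 2 * n + k.natAbs = (n + k.toNat) + (n + (-k).toNat) := by omega
    have h2 : n.factorial * (n + k.natAbs).factorial
        = (n + k.toNat).factorial * (n + (-k).toNat).factorial := by
      rcases le_or_gt 0 k with h | h
      · have h3 : (-k).toNat = 0 := by omega
        have h4 : k.natAbs = k.toNat := by omega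
        rw [h3, h4, add_zero, mul_comm]
      · have h3 : k.toNat = 0 := by omega
        have h4 : n + k.natAbs = n + (-k).toNat := by omega
        rw [h3, h4, add_zero, mul_comm]
    have h5 : Real.exp (θ * k) = (Real.exp θ) ^ (n + k.toNat) * (Real.exp (-θ)) ^ (n + (-k).toNat) := by
      rw [← Real.exp_nat_mul, ← Real.exp_nat_mul, ← Real.exp_add]
      congr 1
      have hz : ((n + k.toNat : ℕ) : ℝ) - ((n + (-k).toNat : ℕ) : ℝ) = (k : ℝ) := by
        have h6 : ((n + k.toNat : ℕ) : ℤ) - ((n + (-k).toNat : ℕ) : ℤ) = k := by push_cast; omega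
        exact_mod_cast h6
      rw [← hz]; ring
    have h2' : (n.factorial : ℝ) * ((n + k.natAbs).factorial : ℝ)
        = ((n + k.toNat).factorial : ℝ) * ((n + (-k).toNat).factorial : ℝ) := by
      exact_mod_cast h2
    have ha : ((n + k.toNat).factorial : ℝ) ≠ 0 := Nat.cast_ne_zero.2 (Nat.factorial_ne_zero _)
    have hb : ((n + (-k).toNat).factorial : ℝ) ≠ 0 := Nat.cast_ne_zero.2 (Nat.factorial_ne_zero _)
    rw [h1, h5, h2', mul_pow, mul_pow, pow_add (t/2)]
    field_simp
  rw [hre, ENNReal.tsum_prod']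
  simp_rw [ENNReal.tsum_mul_left, ENNReal.tsum_mul_right]
  rw [tsum_ofReal_exp _ (by positivity), tsum_ofReal_exp _ (by positivity),
    ← ENNReal.ofReal_mul (Real.exp_nonneg _), ← ENNReal.ofReal_mul (Real.exp_nonneg _),
    ← Real.exp_add, ← Real.exp_add]
  congr 1
  rw [Real.cosh_eq]
  ring

lemma cosh_decomp (r : ℝ) :
    Real.cosh r = 1 + r ^ 2 / 2 + ∑' i : ℕ, r ^ (2 * (i + 2)) / (2 * (i + 2)).factorial := by
  have hs := Real.hasSum_cosh r
  have h2 := Summable.sum_add_tsum_nat_add 2 hs.summable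
  rw [hs.tsum_eq] at h2
  rw [← h2, Finset.sum_range_succ, Finset.sum_range_one]
  norm_num [Nat.factorial]

lemma tail_nonneg (r : ℝ) : 0 ≤ ∑' i : ℕ, r ^ (2 * (i + 2)) / (2 * (i + 2)).factorial := by
  refine tsum_nonneg fun i => ?_
  rw [pow_mul]
  positivity

lemma cosh_ge (r : ℝ) : 1 + r ^ 2 / 2 ≤ Real.cosh r := by
  rw [cosh_decomp r]
  linarith [tail_nonneg r]

lemma tail_le (r : ℝ) (h0 : 0 ≤ r) (h1 : r ≤ 1) :
    ∑' i : ℕ, r ^ (2 * (i + 2)) / (2 * (i + 2)).factorial ≤ 3 * r ^ 4 := by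
  have hsg : Summable (fun i : ℕ => r ^ 4 * (1 / i.factorial : ℝ)) := by
    have := (Real.summable_pow_div_factorial 1).mul_left (r ^ 4)
    simpa using this
  have hterm : ∀ i : ℕ, r ^ (2 * (i + 2)) / (2 * (i + 2)).factorial
      ≤ r ^ 4 * (1 / i.factorial) := by
    intro i
    have hnum : r ^ (2 * (i + 2)) ≤ r ^ 4 := by
      apply pow_le_pow_of_le_one h0 h1
      omega
    have hden : (i.factorial : ℝ) ≤ ((2 * (i + 2)).factorial : ℝ) := by
      exact_mod_cast Nat.factorial_le (by omega)
    rw [mul_one_div]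
    apply div_le_div₀ (by positivity) hnum (by positivity) hden
  have hsum : Summable (fun i : ℕ => r ^ (2 * (i + 2)) / ((2 * (i + 2)).factorial : ℝ)) := by
    refine hsg.of_nonneg_of_le (fun i => by rw [pow_mul]; positivity) hterm
  calc ∑' i : ℕ, r ^ (2 * (i + 2)) / (2 * (i + 2)).factorial
      ≤ ∑' i : ℕ, r ^ 4 * (1 / i.factorial : ℝ) := Summable.tsum_le_tsum hterm hsum hsg
    _ = r ^ 4 * ∑' i : ℕ, (1 / i.factorial : ℝ) := by rw [tsum_mul_left]
    _ = r ^ 4 * Real.exp 1 := by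
        congr 1
        rw [Real.exp_eq_exp_ℝ, NormedSpace.exp_eq_tsum_div]
        simp
    _ ≤ 3 * r ^ 4 := by
        nlinarith [Real.exp_one_lt_d9, pow_nonneg h0 4]

lemma cosh_le (r : ℝ) (h0 : 0 ≤ r) (h1 : r ≤ 1) :
    Real.cosh r ≤ 1 + r ^ 2 / 2 + 3 * r ^ 4 := by
  rw [cosh_decomp r]
  linarith [tail_le r h0 h1]

lemma f_deriv2 : ∀ α : ℝ, StrictConvexOn ℝ (univ : Set ℝ)
    (fun θ : ℝ => Real.cosh θ - 1 - α * θ) := by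
  intro α
  have hd1 : deriv (fun θ : ℝ => Real.cosh θ - 1 - α * θ) = fun θ => Real.sinh θ - α := by
    funext y
    have : HasDerivAt (fun θ : ℝ => Real.cosh θ - 1 - α * θ) (Real.sinh y - α * 1) y :=
      ((Real.hasDerivAt_cosh y).sub_const 1).sub ((hasDerivAt_id y).const_mul α)
    simpa using this.deriv
  refine strictConvexOn_of_deriv2_pos convex_univ ?_ ?_
  · exact ((Real.continuous_cosh.sub continuous_const).sub
      (continuous_const.mul continuous_id)).continuousOn
  · intro y _
    have hit : deriv^[2] (fun θ : ℝ => Real.cosh θ - 1 - α * θ)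
        = deriv (deriv (fun θ : ℝ => Real.cosh θ - 1 - α * θ)) := rfl
    have hds : HasDerivAt (fun θ : ℝ => Real.sinh θ - α) (Real.cosh y) y := by
      simpa using (Real.hasDerivAt_sinh y).sub_const α
    rw [hit, hd1, hds.deriv]
    exact Real.cosh_pos _

lemma root_unique (α : ℝ) (hα : 0 < α) :
    ∃! θ : ℝ, 0 < θ ∧ Real.cosh θ - 1 - α * θ = 0 := by
  set f : ℝ → ℝ := fun θ => Real.cosh θ - 1 - α * θ with hf
  have hconv := f_deriv2 α
  have hf0 : f 0 = 0 := by simp [hf]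
  -- negative point
  set r : ℝ := min α 1 / 3 with hr
  have hrpos : 0 < r := by positivity
  have hr1 : r ≤ 1 := by
    rw [hr]
    have : min α 1 ≤ 1 := min_le_right _ _
    linarith
  have hrα : r ≤ α / 3 := by
    rw [hr]
    have : min α 1 ≤ α := min_le_left _ _
    linarith
  have hr3 : r ≤ 1 / 3 := by
    rw [hr]
    have : min α 1 ≤ 1 := min_le_right _ _
    linarith
  have hneg : f r < 0 := by
    have h1 := cosh_le r hrpos.le hr1
    have hr2 : r ^ 2 ≤ 1 / 9 := by nlinarith
    have h2 : 3 * r ^ 4 ≤ r ^ 2 := by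
      nlinarith [mul_le_mul_of_nonneg_left hr2 (by positivity : (0:ℝ) ≤ 3 * r ^ 2)]
    have h3 : 3 * r * r ≤ α * r := by
      nlinarith [mul_nonneg (by linarith [hrα] : (0:ℝ) ≤ α - 3 * r) hrpos.le]
    simp only [hf]
    nlinarith
  -- positive point
  set b : ℝ := 2 * α + 2 with hb
  have hrb : r < b := by nlinarith
  have hpos : 0 < f b := by
    have := cosh_ge b
    simp only [hf]
    nlinarith
  -- existence via IVT
  have hcont : ContinuousOn f (Icc r b) :=
    ((Real.continuous_cosh.sub continuous_const).sub
      (continuous_const.mul continuous_id)).continuousOn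
  have hivt := intermediate_value_Ioo hrb.le hcont
  have h0mem : (0 : ℝ) ∈ Ioo (f r) (f b) := ⟨hneg, hpos⟩
  obtain ⟨θ, hθmem, hθ⟩ := hivt h0mem
  refine ⟨θ, ⟨lt_trans hrpos hθmem.1, hθ⟩, ?_⟩
  rintro θ' ⟨hθ'pos, hθ'root⟩
  by_contra hne
  have hconv' : StrictConvexOn ℝ (univ : Set ℝ) f := hconv
  have key : ∀ u v : ℝ, 0 < u → u < v → f v = 0 → f u = 0 → False := by
    intro u v hu huv hfv hfu
    have hv : 0 < v := lt_trans hu huv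
    have ha : (0:ℝ) < 1 - u / v := by
      have : u / v < 1 := (div_lt_one hv).2 huv
      linarith
    have hb0 : (0:ℝ) < u / v := by positivity
    have hco := hconv'.2 (mem_univ (0:ℝ)) (mem_univ v) hv.ne ha hb0 (by ring)
    simp only [smul_eq_mul, mul_zero, zero_add, hf0, hfv, add_zero] at hco
    rw [div_mul_cancel₀ _ hv.ne'] at hco
    rw [hfu] at hco
    exact lt_irrefl 0 hco
  have hθpos : 0 < θ := lt_trans hrpos hθmem.1
  rcases lt_or_gt_of_ne hne with h | h
  · exact key θ' θ hθ'pos h hθ hθ'root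
  · exact key θ θ' hθpos h hθ'root hθ

lemma root_asymp (α : ℝ) (hα : 0 < α) (hα2 : α < 1 / 2) (θ : ℝ) (hθ : 0 < θ)
    (hroot : Real.cosh θ - 1 - α * θ = 0) : |θ - 2 * α| ≤ 48 * α ^ 2 := by
  have hge := cosh_ge θ
  have hθle1 : θ ≤ 1 := by
    by_contra hgt
    push_neg at hgt
    nlinarith [mul_pos hθ (by linarith : (0:ℝ) < θ / 2 - α)]
  have hθ2α : θ ≤ 2 * α := by nlinarith
  have hT := cosh_le θ hθ.le hθle1
  have h1 : (2 * α - θ) * θ ≤ 6 * θ ^ 3 * θ := by nlinarith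
  have h2 : 2 * α - θ ≤ 6 * θ ^ 3 := le_of_mul_le_mul_right h1 hθ
  have h3 : θ ^ 3 ≤ 8 * α ^ 3 := by
    have := pow_le_pow_left₀ hθ.le hθ2α 3
    nlinarith [this]
  rw [abs_of_nonpos (by linarith)]
  nlinarith [sq_nonneg α, mul_pos hα hα]
/-- A continuous-time simple random walk on `ℤ` with jump rate `1`, started at `0`:
at rate `1` it jumps to `±1` with probability `1/2` each.  The law is axiomatized via
right-continuous step paths with jumps of size `1`, stationary independent increments,
and the explicit one-dimensional marginal distribution (the difference of two independent
`Poisson (t/2)` variables). -/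
structure SRW (Ω : Type) [MeasurableSpace Ω] where
  μ : Measure Ω
  prob : IsProbabilityMeasure μ
  W : ℝ → Ω → ℤ
  meas : ∀ t : ℝ, Measurable (W t)
  start : ∀ t : ℝ, t ≤ 0 → ∀ ω, W t ω = 0
  right_const : ∀ ω, ∀ t : ℝ, ∃ ε > 0, ∀ s ∈ Set.Ico t (t + ε), W s ω = W t ω
  unit_jumps : ∀ ω, ∀ t : ℝ, ∃ ε > 0, ∀ s ∈ Set.Ioo (t - ε) t, (W t ω - W s ω).natAbs ≤ 1
  marginal : ∀ t : ℝ, 0 ≤ t → ∀ k : ℤ,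
    μ {ω | W t ω = k} = ENNReal.ofReal
      (Real.exp (-t) * ∑' n : ℕ, (t / 2) ^ (2 * n + k.natAbs) /
        (n.factorial * (n + k.natAbs).factorial))
  stationary : ∀ s t : ℝ, 0 ≤ s → s ≤ t →
    μ.map (fun ω => W t ω - W s ω) = μ.map (W (t - s))
  indep_incr : ∀ n : ℕ, ∀ t : Fin (n + 1) → ℝ, Monotone t → 0 ≤ t 0 →
    iIndepFun (m := fun _ => inferInstance)
      (fun i : Fin n => fun ω => W (t i.succ) ω - W (t i.castSucc) ω) μ


variable {Ω : Type} [MeasurableSpace Ω]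

lemma SRW.lintegral_exp (w : SRW Ω) (θ t : ℝ) (ht : 0 ≤ t) :
    ∫⁻ ω, ENNReal.ofReal (Real.exp (θ * (w.W t ω : ℝ))) ∂w.μ
      = ENNReal.ofReal (Real.exp (t * (Real.cosh θ - 1))) := by
  have hme : Measurable fun k : ℤ => ENNReal.ofReal (Real.exp (θ * (k : ℝ))) :=
    measurable_of_countable _
  rw [← lintegral_map hme (w.meas t), lintegral_countable']
  have hk : ∀ k : ℤ, (w.μ.map (w.W t)) {k} = w.μ {ω | w.W t ω = k} := fun k => by
    rw [Measure.map_apply (w.meas t) (measurableSet_singleton k)]; rfl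
  simp_rw [hk, w.marginal t ht]
  exact mgf_sum θ t ht

lemma SRW.lintegral_exp_incr (w : SRW Ω) (θ s t : ℝ) (hs : 0 ≤ s) (hst : s ≤ t) :
    ∫⁻ ω, ENNReal.ofReal (Real.exp (θ * ((w.W t ω - w.W s ω : ℤ) : ℝ))) ∂w.μ
      = ENNReal.ofReal (Real.exp ((t - s) * (Real.cosh θ - 1))) := by
  have hme : Measurable fun k : ℤ => ENNReal.ofReal (Real.exp (θ * (k : ℝ))) :=
    measurable_of_countable _
  have hmeas : Measurable fun ω => w.W t ω - w.W s ω := (w.meas t).sub (w.meas s)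
  rw [← lintegral_map hme hmeas, w.stationary s t hs hst,
    lintegral_map hme (w.meas (t - s))]
  exact w.lintegral_exp θ (t - s) (by linarith)


lemma SRW.telescope (w : SRW Ω) (δ : ℝ) {N : ℕ} (j : ℕ) (hj : j ≤ N) (ω : Ω) :
    ∑ i : Fin N, (if (i : ℕ) < j
      then w.W (((i : ℕ) + 1) * δ) ω - w.W ((i : ℕ) * δ) ω else 0)
    = w.W (j * δ) ω := by
  rw [Fin.sum_univ_eq_sum_range
    (fun i => if i < j then w.W ((i + 1) * δ) ω - w.W (i * δ) ω else 0)]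
  rw [← Finset.sum_subset (Finset.range_subset_range.2 hj)
    (fun i _ hi => by simp_all [Finset.mem_range])]
  rw [Finset.sum_ite_of_true (fun i hi => Finset.mem_range.1 hi)]
  have := Finset.sum_range_sub (fun i => w.W ((i : ℕ) * δ) ω) j
  push_cast at this ⊢
  rw [this, zero_mul, w.start 0 le_rfl, sub_zero]

lemma SRW.indep_past_future (w : SRW Ω) {δ : ℝ} (hδ : 0 ≤ δ) (k N : ℕ) (hk : k ≤ N)
    (F : (Fin (k + 1) → ℤ) → ENNReal) (G : ℤ → ENNReal) :
    IndepFun (fun ω => F (fun j => w.W ((j : ℕ) * δ) ω))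
      (fun ω => G (w.W (N * δ) ω - w.W (k * δ) ω)) w.μ := by
  classical
  set X : Fin N → Ω → ℤ :=
    fun i ω => w.W (((i : ℕ) + 1) * δ) ω - w.W ((i : ℕ) * δ) ω with hX
  have hI : iIndepFun (m := fun _ => inferInstance) X w.μ := by
    have := w.indep_incr N (fun i => (i : ℕ) * δ)
      (fun i j hij => by
        have : ((i : ℕ) : ℝ) ≤ ((j : ℕ) : ℝ) := by exact_mod_cast Fin.le_iff_val_le_val.1 hij
        exact mul_le_mul_of_nonneg_right this hδ)
      (by simp)
    convert this using 2 with i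
    funext ω
    simp only [hX, Fin.val_succ, Fin.coe_castSucc]
    push_cast
    ring_nf
  set S : Finset (Fin N) := Finset.univ.filter (fun i => (i : ℕ) < k) with hS
  set T : Finset (Fin N) := Finset.univ.filter (fun i => k ≤ (i : ℕ)) with hT
  have hdisj : Disjoint S T := by
    simp only [hS, hT, Finset.disjoint_left, Finset.mem_filter]
    omega
  have base : IndepFun (fun a (i : S) => X i a) (fun a (i : T) => X i a) w.μ :=
    hI.indepFun_finset S T hdisj (fun i => (w.meas _).sub (w.meas _))
  set φ : ({x // x ∈ S} → ℤ) → (Fin (k + 1) → ℤ) :=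
    fun v j => ∑ i : {x // x ∈ S}, if ((i : Fin N) : ℕ) < (j : ℕ) then v i else 0 with hφ
  set ψ : ({x // x ∈ T} → ℤ) → ℤ := fun v => ∑ i : {x // x ∈ T}, v i with hψ
  have hsumS : ∀ (f : Fin N → ℤ) (j : ℕ), j ≤ k →
      (∑ i : {x // x ∈ S}, if ((i : Fin N) : ℕ) < j then f i else 0)
        = ∑ i : Fin N, if (i : ℕ) < j then f i else 0 := by
    intro f j hj
    rw [Finset.sum_coe_sort S (fun i => if (i : ℕ) < j then f i else 0), hS,
      Finset.sum_filter]
    refine Finset.sum_congr rfl fun i _ => ?_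
    by_cases h1 : (i : ℕ) < k <;> by_cases h2 : (i : ℕ) < j <;> simp [h1, h2] <;> omega
  have h1 : (fun ω => F (fun j => w.W ((j : ℕ) * δ) ω))
      = (F ∘ φ) ∘ (fun a (i : S) => X i a) := by
    funext ω
    simp only [Function.comp_apply]
    congr 1
    funext j
    simp only [hφ]
    rw [hsumS (fun i => X i ω) (j : ℕ) (Nat.lt_succ_iff.1 j.isLt)]
    exact (w.telescope δ (j : ℕ) (le_trans (Nat.lt_succ_iff.1 j.isLt) hk) ω).symm
  have hsumT : ∀ ω, ψ (fun i => X i ω) = w.W (N * δ) ω - w.W (k * δ) ω := by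
    intro ω
    simp only [hψ]
    rw [Finset.sum_coe_sort T (fun i => X i ω), hT, Finset.sum_filter]
    have hN : ∑ i : Fin N, X i ω = w.W (N * δ) ω := by
      rw [← w.telescope δ N le_rfl ω]
      exact Finset.sum_congr rfl fun i _ => by simp [i.isLt, hX]
    have hk' : ∑ i : Fin N, (if (i : ℕ) < k then X i ω else 0) = w.W (k * δ) ω :=
      w.telescope δ k hk ω
    have hsplit : ∑ i : Fin N, X i ω
        = (∑ i : Fin N, if (i : ℕ) < k then X i ω else 0)
          + ∑ i : Fin N, if k ≤ (i : ℕ) then X i ω else 0 := by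
      rw [← Finset.sum_add_distrib]
      refine Finset.sum_congr rfl fun i _ => ?_
      by_cases h : (i : ℕ) < k <;> simp [h] <;> omega
    linarith [hN, hk', hsplit]
  have h2 : (fun ω => G (w.W (N * δ) ω - w.W (k * δ) ω))
      = (G ∘ ψ) ∘ (fun a (i : T) => X i a) := by
    funext ω
    simp only [Function.comp_apply]
    rw [← hsumT ω]
  rw [h1, h2]
  exact base.comp (measurable_of_countable _) (measurable_of_countable _)

lemma SRW.ville (w : SRW Ω) (θ α δ : ℝ) (hθ : 0 < θ) (hroot : Real.cosh θ - 1 = α * θ)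
    (hδ : 0 < δ) (x : ℤ) (N : ℕ) :
    w.μ {ω | ∃ k : ℕ, k ≤ N ∧ 0 < (x : ℝ) + (w.W ((k : ℝ) * δ) ω : ℝ) - α * ((k : ℝ) * δ)}
      ≤ ENNReal.ofReal (Real.exp (θ * (x : ℝ))) := by
  classical
  haveI := w.prob
  set M : ℕ → Ω → ℝ :=
    fun k ω => Real.exp (θ * (w.W ((k : ℝ) * δ) ω : ℝ) - ((k : ℝ) * δ) * (α * θ)) with hM
  set a : ℝ := Real.exp (θ * (-(x : ℝ))) with ha
  set A : ℕ → Set Ω := fun k => {ω | a < M k ω ∧ ∀ j < k, ¬ a < M j ω} with hA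
  have hMmeas : ∀ k, Measurable (M k) := fun k =>
    (measurable_of_countable
      (fun z : ℤ => Real.exp (θ * (z : ℝ) - ((k : ℝ) * δ) * (α * θ)))).comp (w.meas _)
  have hAmeas : ∀ k, MeasurableSet (A k) := by
    intro k
    have : A k = {ω | a < M k ω} ∩ ⋂ j, ⋂ (_ : j < k), {ω | ¬ a < M j ω} := by
      ext ω; simp [hA]
    rw [this]
    exact (measurableSet_lt measurable_const (hMmeas k)).inter
      (MeasurableSet.iInter fun j => MeasurableSet.iInter fun _ =>
        (measurableSet_lt measurable_const (hMmeas j)).compl)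
  have hcond : ∀ (k : ℕ) (ω : Ω),
      (0 < (x : ℝ) + (w.W ((k : ℝ) * δ) ω : ℝ) - α * ((k : ℝ) * δ)) ↔ a < M k ω := by
    intro k ω
    rw [ha, hM]
    rw [Real.exp_lt_exp]
    constructor <;> intro h <;> nlinarith
  have hdisjA : ∀ j k : ℕ, j ≠ k → Disjoint (A j) (A k) := by
    intro j k hne
    rw [Set.disjoint_left]
    rintro ω ⟨h1, h2⟩ ⟨h3, h4⟩
    rcases hne.lt_or_gt with h | h
    · exact h4 j h h1
    · exact h2 k h h3
  -- per-k bound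
  have hone : ∀ m : ℕ,
      ∫⁻ ω, ENNReal.ofReal (M m ω) ∂w.μ = 1 := by
    intro m
    have : ∀ ω, ENNReal.ofReal (M m ω)
        = ENNReal.ofReal (Real.exp (θ * (w.W ((m : ℝ) * δ) ω : ℝ)))
          * ENNReal.ofReal (Real.exp (-(((m : ℝ) * δ) * (α * θ)))) := by
      intro ω
      rw [← ENNReal.ofReal_mul (Real.exp_nonneg _), ← Real.exp_add]
      congr 1 <;> ring
    simp_rw [this]
    rw [lintegral_mul_const' _ _ ENNReal.ofReal_ne_top,
      w.lintegral_exp θ ((m : ℝ) * δ) (by positivity),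
      ← ENNReal.ofReal_mul (Real.exp_nonneg _), ← Real.exp_add, hroot]
    norm_num
  have hkey : ∀ k : ℕ, k ≤ N →
      ENNReal.ofReal a * w.μ (A k)
        ≤ ∫⁻ ω, (A k).indicator (fun ω => ENNReal.ofReal (M N ω)) ω ∂w.μ := by
    intro k hkN
    set G : Ω → ENNReal := fun ω => ENNReal.ofReal (Real.exp (θ *
      ((w.W ((N : ℝ) * δ) ω - w.W ((k : ℝ) * δ) ω : ℤ) : ℝ)
        - ((N : ℝ) * δ - (k : ℝ) * δ) * (α * θ))) with hG
    have hGmeas : Measurable G := by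
      rw [hG]
      exact (measurable_of_countable (fun z : ℤ => ENNReal.ofReal (Real.exp (θ * (z : ℝ)
        - ((N : ℝ) * δ - (k : ℝ) * δ) * (α * θ))))).comp ((w.meas _).sub (w.meas _))
    have hGint : ∫⁻ ω, G ω ∂w.μ = 1 := by
      have : ∀ ω, G ω = ENNReal.ofReal (Real.exp (θ *
          ((w.W ((N : ℝ) * δ) ω - w.W ((k : ℝ) * δ) ω : ℤ) : ℝ)))
          * ENNReal.ofReal (Real.exp (-(((N : ℝ) * δ - (k : ℝ) * δ) * (α * θ)))) := by
        intro ω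
        rw [hG, ← ENNReal.ofReal_mul (Real.exp_nonneg _), ← Real.exp_add]
        congr 1 <;> ring
      simp_rw [this]
      rw [lintegral_mul_const' _ _ ENNReal.ofReal_ne_top,
        w.lintegral_exp_incr θ ((k : ℝ) * δ) ((N : ℝ) * δ) (by positivity)
          (by have : (k : ℝ) ≤ N := Nat.cast_le.2 hkN
              nlinarith),
        ← ENNReal.ofReal_mul (Real.exp_nonneg _), ← Real.exp_add, hroot]
      norm_num
    -- independence
    have hindep : IndepFun ((A k).indicator (fun ω => ENNReal.ofReal (M k ω))) G w.μ := by
      have := w.indep_past_future hδ.le k N hkN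
        (fun v : Fin (k + 1) → ℤ => Set.indicator
          {v : Fin (k + 1) → ℤ | a < Real.exp (θ * (v ⟨k, Nat.lt_succ_self k⟩ : ℝ)
              - ((k : ℝ) * δ) * (α * θ))
            ∧ ∀ j : Fin (k + 1), (j : ℕ) < k →
              ¬ a < Real.exp (θ * (v j : ℝ) - (((j : ℕ) : ℝ) * δ) * (α * θ))}
          (fun v => ENNReal.ofReal (Real.exp (θ * (v ⟨k, Nat.lt_succ_self k⟩ : ℝ)
            - ((k : ℝ) * δ) * (α * θ)))) v)
        (fun z : ℤ => ENNReal.ofReal (Real.exp (θ * (z : ℝ)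
          - ((N : ℝ) * δ - (k : ℝ) * δ) * (α * θ))))
      convert this using 1
      funext ω
      rw [Set.indicator_apply, Set.indicator_apply]
      have hmem : (ω ∈ A k) ↔ ((fun j : Fin (k + 1) => w.W (((j : ℕ) : ℝ) * δ) ω) ∈
          {v : Fin (k + 1) → ℤ | a < Real.exp (θ * (v ⟨k, Nat.lt_succ_self k⟩ : ℝ)
              - ((k : ℝ) * δ) * (α * θ))
            ∧ ∀ j : Fin (k + 1), (j : ℕ) < k →
              ¬ a < Real.exp (θ * (v j : ℝ) - (((j : ℕ) : ℝ) * δ) * (α * θ))}) := by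
        simp only [hA, Set.mem_setOf_eq, hM]
        constructor
        · rintro ⟨h1, h2⟩
          exact ⟨h1, fun j hj => h2 (j : ℕ) hj⟩
        · rintro ⟨h1, h2⟩
          exact ⟨h1, fun j hj => h2 ⟨j, by omega⟩ hj⟩
      by_cases hω : ω ∈ A k
      · rw [if_pos hω, if_pos (hmem.1 hω)]
      · rw [if_neg hω, if_neg (fun hc => hω (hmem.2 hc))]
    have hImeas : Measurable ((A k).indicator (fun ω => ENNReal.ofReal (M k ω))) :=
      ((ENNReal.measurable_ofReal.comp (hMmeas k))).indicator (hAmeas k)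
    have hfact : ∫⁻ ω, ((A k).indicator (fun ω => ENNReal.ofReal (M k ω)) * G) ω ∂w.μ
        = (∫⁻ ω, (A k).indicator (fun ω => ENNReal.ofReal (M k ω)) ω ∂w.μ)
          * ∫⁻ ω, G ω ∂w.μ :=
      lintegral_mul_eq_lintegral_mul_lintegral_of_indepFun hImeas hGmeas hindep
    have hptwise : ∀ ω, (A k).indicator (fun ω => ENNReal.ofReal (M N ω)) ω
        = ((A k).indicator (fun ω => ENNReal.ofReal (M k ω)) * G) ω := by
      intro ω
      by_cases hω : ω ∈ A k
      · rw [Set.indicator_of_mem hω, Pi.mul_apply, Set.indicator_of_mem hω, hG,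
          ← ENNReal.ofReal_mul (Real.exp_nonneg _), ← Real.exp_add]
        simp only [hM]
        congr 1
        push_cast
        ring
      · rw [Set.indicator_of_notMem hω, Pi.mul_apply, Set.indicator_of_notMem hω, zero_mul]
    calc ENNReal.ofReal a * w.μ (A k)
        = ∫⁻ ω in A k, ENNReal.ofReal a ∂w.μ := by
          rw [setLIntegral_const, mul_comm]
      _ ≤ ∫⁻ ω in A k, ENNReal.ofReal (M k ω) ∂w.μ := by
          refine setLIntegral_mono (ENNReal.measurable_ofReal.comp (hMmeas k)) ?_
          intro ω hω
          exact ENNReal.ofReal_le_ofReal (le_of_lt hω.1)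
      _ = ∫⁻ ω, (A k).indicator (fun ω => ENNReal.ofReal (M k ω)) ω ∂w.μ := by
          rw [lintegral_indicator (hAmeas k)]
      _ = (∫⁻ ω, (A k).indicator (fun ω => ENNReal.ofReal (M k ω)) ω ∂w.μ)
            * ∫⁻ ω, G ω ∂w.μ := by rw [hGint, mul_one]
      _ = ∫⁻ ω, ((A k).indicator (fun ω => ENNReal.ofReal (M k ω)) * G) ω ∂w.μ := hfact.symm
      _ = ∫⁻ ω, (A k).indicator (fun ω => ENNReal.ofReal (M N ω)) ω ∂w.μ := by
          exact lintegral_congr fun ω => (hptwise ω).symm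
  -- assembling
  set E := {ω | ∃ k : ℕ, k ≤ N ∧
    0 < (x : ℝ) + (w.W ((k : ℝ) * δ) ω : ℝ) - α * ((k : ℝ) * δ)} with hE
  have hEsub : E ⊆ ⋃ k ∈ Finset.range (N + 1), A k := by
    rintro ω ⟨k, hkN, hk⟩
    rw [hcond] at hk
    have hex : ∃ j, a < M j ω := ⟨k, hk⟩
    refine Set.mem_biUnion (Finset.mem_range.2 ?_) (⟨Nat.find_spec hex, fun j hj =>
      Nat.find_min hex hj⟩ : ω ∈ A (Nat.find hex))
    have := Nat.find_min' hex hk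
    omega
  have hsum : ∀ ω, ∑ k ∈ Finset.range (N + 1),
      (A k).indicator (fun ω => ENNReal.ofReal (M N ω)) ω ≤ ENNReal.ofReal (M N ω) := by
    intro ω
    by_cases h : ∃ k ∈ Finset.range (N + 1), ω ∈ A k
    · obtain ⟨j, hj, hωj⟩ := h
      rw [Finset.sum_eq_single_of_mem j hj (fun k hk hne =>
        Set.indicator_of_notMem (fun hωk =>
          (Set.disjoint_left.1 (hdisjA k j hne) hωk) hωj) _)]
      rw [Set.indicator_of_mem hωj]
    · push_neg at h
      rw [Finset.sum_eq_zero (fun k hk => Set.indicator_of_notMem (h k hk) _)]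
      exact bot_le
  have hmain : ENNReal.ofReal a * w.μ E ≤ 1 := by
    calc ENNReal.ofReal a * w.μ E
        ≤ ENNReal.ofReal a * ∑ k ∈ Finset.range (N + 1), w.μ (A k) := by
          refine mul_le_mul_right ?_ _
          exact (measure_mono hEsub).trans (measure_biUnion_finset_le _ _)
      _ = ∑ k ∈ Finset.range (N + 1), ENNReal.ofReal a * w.μ (A k) := by
          rw [Finset.mul_sum]
      _ ≤ ∑ k ∈ Finset.range (N + 1),
            ∫⁻ ω, (A k).indicator (fun ω => ENNReal.ofReal (M N ω)) ω ∂w.μ := by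
          refine Finset.sum_le_sum fun k hk => hkey k (by
            simp only [Finset.mem_range] at hk; omega)
      _ = ∫⁻ ω, ∑ k ∈ Finset.range (N + 1),
            (A k).indicator (fun ω => ENNReal.ofReal (M N ω)) ω ∂w.μ := by
          rw [lintegral_finset_sum]
          intro k _
          exact (ENNReal.measurable_ofReal.comp (hMmeas N)).indicator (hAmeas k)
      _ ≤ ∫⁻ ω, ENNReal.ofReal (M N ω) ∂w.μ := lintegral_mono hsum
      _ = 1 := hone N
  have hle : w.μ E ≤ (ENNReal.ofReal a)⁻¹ :=
    ENNReal.le_inv_iff_mul_le.2 (by rwa [mul_comm] at hmain)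
  have hfin : (ENNReal.ofReal a)⁻¹ = ENNReal.ofReal (Real.exp (θ * (x : ℝ))) := by
    have h9 : (Real.exp (θ * -(x : ℝ)))⁻¹ = Real.exp (θ * (x : ℝ)) := by
      rw [← Real.exp_neg]; ring_nf
    rw [ha, ← ENNReal.ofReal_inv_of_pos (Real.exp_pos _), h9]
  exact hle.trans_eq hfin

lemma SRW.escape (w : SRW Ω) (θ α : ℝ) (hθ : 0 < θ) (hα : 0 < α)
    (hroot : Real.cosh θ - 1 = α * θ) (x : ℤ) :
    w.μ {ω | ∃ t : ℝ, 0 ≤ t ∧ 0 < (x : ℝ) + (w.W t ω : ℝ) - α * t}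
      ≤ ENNReal.ofReal (Real.exp (θ * (x : ℝ))) := by
  classical
  set bnd := ENNReal.ofReal (Real.exp (θ * (x : ℝ))) with hbnd
  set D : ℕ → Set Ω := fun n => {ω | ∃ k : ℕ,
    0 < (x : ℝ) + (w.W ((k : ℝ) * ((2 : ℝ) ^ n)⁻¹) ω : ℝ)
      - α * ((k : ℝ) * ((2 : ℝ) ^ n)⁻¹)} with hD
  have hDfin : ∀ n : ℕ, w.μ (D n) ≤ bnd := by
    intro n
    have hδ : (0 : ℝ) < ((2 : ℝ) ^ n)⁻¹ := by positivity
    have heq : D n = ⋃ N : ℕ, {ω | ∃ k : ℕ, k ≤ N ∧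
        0 < (x : ℝ) + (w.W ((k : ℝ) * ((2 : ℝ) ^ n)⁻¹) ω : ℝ)
          - α * ((k : ℝ) * ((2 : ℝ) ^ n)⁻¹)} := by
      ext ω
      simp only [hD, Set.mem_setOf_eq, Set.mem_iUnion]
      constructor
      · rintro ⟨k, hk⟩; exact ⟨k, k, le_rfl, hk⟩
      · rintro ⟨N, k, _, hk⟩; exact ⟨k, hk⟩
    have hmono : Monotone (fun N : ℕ => {ω | ∃ k : ℕ, k ≤ N ∧
        0 < (x : ℝ) + (w.W ((k : ℝ) * ((2 : ℝ) ^ n)⁻¹) ω : ℝ)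
          - α * ((k : ℝ) * ((2 : ℝ) ^ n)⁻¹)}) := by
      intro N N' hNN' ω
      rintro ⟨k, hk, h⟩
      exact ⟨k, hk.trans hNN', h⟩
    rw [heq, hmono.directed_le.measure_iUnion]
    exact iSup_le fun N => w.ville θ α _ hθ hroot hδ x N
  have hDmono : Monotone D := by
    intro n m hnm ω hω
    obtain ⟨d, rfl⟩ := Nat.exists_eq_add_of_le hnm
    obtain ⟨k, hk⟩ := hω
    refine ⟨k * 2 ^ d, ?_⟩
    have hcast : ((k * 2 ^ d : ℕ) : ℝ) * ((2 : ℝ) ^ (n + d))⁻¹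
        = (k : ℝ) * ((2 : ℝ) ^ n)⁻¹ := by
      push_cast
      rw [pow_add]
      field_simp
    rw [hcast]
    exact hk
  have hEsub : {ω | ∃ t : ℝ, 0 ≤ t ∧ 0 < (x : ℝ) + (w.W t ω : ℝ) - α * t}
      ⊆ ⋃ n, D n := by
    rintro ω ⟨t, ht0, hpos⟩
    obtain ⟨ε, hε, hconst⟩ := w.right_const ω t
    set slack := (x : ℝ) + (w.W t ω : ℝ) - α * t with hslack
    have hminpos : 0 < min ε (slack / (α + 1)) := lt_min hε (by positivity)
    obtain ⟨n, hn⟩ := exists_pow_lt_of_lt_one hminpos (by norm_num : (1 : ℝ) / 2 < 1)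
    have hn' : ((2 : ℝ) ^ n)⁻¹ < min ε (slack / (α + 1)) := by
      rwa [div_pow, one_pow, one_div] at hn
    set k : ℕ := ⌈t * 2 ^ n⌉₊ with hkdef
    set s : ℝ := (k : ℝ) * ((2 : ℝ) ^ n)⁻¹ with hs
    have hpow : (0 : ℝ) < 2 ^ n := by positivity
    have hts : t ≤ s := by
      calc t ≤ (k : ℝ) / 2 ^ n := (le_div_iff₀ hpow).2 (Nat.le_ceil _)
        _ = s := by rw [hs, div_eq_mul_inv]
    have hst : s < t + ((2 : ℝ) ^ n)⁻¹ := by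
      have h2 : (k : ℝ) < t * 2 ^ n + 1 := Nat.ceil_lt_add_one (by positivity)
      calc s = (k : ℝ) * ((2 : ℝ) ^ n)⁻¹ := hs
        _ < (t * 2 ^ n + 1) * ((2 : ℝ) ^ n)⁻¹ :=
            mul_lt_mul_of_pos_right h2 (by positivity)
        _ = t + ((2 : ℝ) ^ n)⁻¹ := by field_simp
    have hW : w.W s ω = w.W t ω := by
      refine hconst s ⟨hts, ?_⟩
      have := lt_of_lt_of_le hn' (min_le_left _ _)
      linarith
    have h7 : s - t < slack / (α + 1) := by
      have := lt_of_lt_of_le hn' (min_le_right _ _)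
      linarith
    have e1 : α * (s - t) < α * (slack / (α + 1)) := mul_lt_mul_of_pos_left h7 hα
    have h8 : α / (α + 1) < 1 := (div_lt_one (by linarith)).2 (by linarith)
    have e2 : α * (slack / (α + 1)) < slack :=
      calc α * (slack / (α + 1)) = slack * (α / (α + 1)) := by ring
        _ < slack * 1 := mul_lt_mul_of_pos_left h8 hpos
        _ = slack := mul_one _
    refine Set.mem_iUnion.2 ⟨n, ?_⟩
    simp only [hD, Set.mem_setOf_eq]
    refine ⟨k, ?_⟩
    rw [← hs, hW]
    have hxw : (x : ℝ) + (w.W t ω : ℝ) - α * s = slack - α * (s - t) := by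
      rw [hslack]; ring
    linarith [e1, e2, hxw]
  calc w.μ {ω | ∃ t : ℝ, 0 ≤ t ∧ 0 < (x : ℝ) + (w.W t ω : ℝ) - α * t}
      ≤ w.μ (⋃ n, D n) := measure_mono hEsub
    _ = ⨆ n, w.μ (D n) := hDmono.directed_le.measure_iUnion
    _ ≤ bnd := iSup_le hDfin

/-- Let `α > 0` and let `θ_α > 0` be the unique nonzero root of `cosh θ - 1 - αθ = 0`.
For a rate-1 continuous-time simple random walk started at an integer `x ≤ 0` (i.e. `x + W`),
`P[ ∃ t ≥ 0, x + W_t - αt > 0 ] ≤ e^(θ_α x)`; moreover `θ_α = 2α + O(α²)` as `α → 0`. -/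
theorem drifted_walk_escape {Ω : Type} [MeasurableSpace Ω] (w : SRW Ω) :
    (∀ α : ℝ, 0 < α →
      (∃! θ : ℝ, 0 < θ ∧ Real.cosh θ - 1 - α * θ = 0) ∧
      ∀ θ : ℝ, 0 < θ → Real.cosh θ - 1 - α * θ = 0 →
        ∀ x : ℤ, x ≤ 0 →
          w.μ {ω | ∃ t : ℝ, 0 ≤ t ∧ 0 < (x : ℝ) + (w.W t ω : ℝ) - α * t}
            ≤ ENNReal.ofReal (Real.exp (θ * (x : ℝ)))) ∧
    (∃ C : ℝ, 0 < C ∧ ∃ α₀ : ℝ, 0 < α₀ ∧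
      ∀ α : ℝ, 0 < α → α < α₀ →
        ∀ θ : ℝ, 0 < θ → Real.cosh θ - 1 - α * θ = 0 → |θ - 2 * α| ≤ C * α ^ 2) := by
  constructor
  · intro α hα
    refine ⟨root_unique α hα, ?_⟩
    intro θ hθ hroot x hx
    exact w.escape θ α hθ hα (by linarith) x
  · exact ⟨48, by norm_num, 1/2, by norm_num,
      fun α hα hα2 θ hθ hroot => root_asymp α hα hα2 θ hθ hroot⟩

end
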